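/- Let E be a measurable space, μ a probability measure on E, and X_1, X_2, … independent E-valued random variables each with law μ. Let F be a countable family of measurable functions from E to [−1,1], let n ≥ 1, let δ ∈ (0,1), and suppose there exist m measurable functions g_1, …, g_m : E → [−1,1] forming a √(2/n)-net for F in the uniform norm. Then with probability at least 1 − δ, sup_{f∈F} |(1/n)∑_{i=1}^n f(X_i) − ∫_E f dμ| ≤ √((128/n)·(ln m + ln(8/δ))). -/

import Mathlib

open MeasureTheory Real
open scoped ENNReal


lemma myexp_quad {x : ℝ} (hx : |x| ≤ 1) : Real.exp x ≤ 1 + x + x ^ 2 := by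
  have h := Real.exp_bound hx (by norm_num : 0 < 2)
  have hs : ∑ m ∈ Finset.range 2, x ^ m / m.factorial = 1 + x := by
    simp [Finset.sum_range_succ]
  rw [hs] at h
  have h2 : |x| ^ 2 = x ^ 2 := sq_abs x
  have := abs_le.1 h
  norm_num at this
  nlinarith [this.2]

lemma myint_bdd {Ω : Type*} [MeasurableSpace Ω] (P : Measure Ω) [IsFiniteMeasure P]
    {f : Ω → ℝ} (hf : Measurable f) {C : ℝ} (h : ∀ ω, |f ω| ≤ C) : Integrable f P :=
  ⟨hf.aestronglyMeasurable, HasFiniteIntegral.of_bounded (C := C)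
    (ae_of_all _ (by simpa [Real.norm_eq_abs] using h))⟩

lemma mymgf_bdd {Ω : Type*} [MeasurableSpace Ω] (P : Measure Ω) [IsProbabilityMeasure P]
    {Y : Ω → ℝ} (hmeas : Measurable Y) (hbdd : ∀ ω, |Y ω| ≤ 2)
    (hmean : ∫ ω, Y ω ∂P = 0) {t : ℝ} (ht0 : 0 ≤ t) (ht : t ≤ 1/2) :
    ProbabilityTheory.mgf Y P t ≤ Real.exp (4 * t ^ 2) := by
  have hY : Integrable Y P := myint_bdd P hmeas hbdd
  have hY2 : Integrable (fun ω => Y ω ^ 2) P := by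
    refine myint_bdd P (hmeas.pow_const 2) (C := 4) fun ω => ?_
    rw [abs_pow]
    nlinarith [hbdd ω, abs_nonneg (Y ω)]
  have hint : Integrable (fun ω => Real.exp (t * Y ω)) P := by
    refine myint_bdd P ((hmeas.const_mul t).exp) (C := Real.exp 1) fun ω => ?_
    rw [abs_of_pos (Real.exp_pos _)]
    refine Real.exp_le_exp.2 ?_
    calc t * Y ω ≤ |t * Y ω| := le_abs_self _
    _ = t * |Y ω| := by rw [abs_mul, abs_of_nonneg ht0]
    _ ≤ (1/2) * 2 := by
        exact mul_le_mul ht (hbdd ω) (abs_nonneg _) (by norm_num)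
    _ = 1 := by norm_num
  have hpt : ∀ ω, Real.exp (t * Y ω) ≤ 1 + t * Y ω + t ^ 2 * Y ω ^ 2 := by
    intro ω
    have habs : |t * Y ω| ≤ 1 := by
      rw [abs_mul, abs_of_nonneg ht0]
      calc t * |Y ω| ≤ (1/2) * 2 := mul_le_mul ht (hbdd ω) (abs_nonneg _) (by norm_num)
      _ = 1 := by norm_num
    calc Real.exp (t * Y ω) ≤ 1 + t * Y ω + (t * Y ω) ^ 2 := myexp_quad habs
    _ = 1 + t * Y ω + t ^ 2 * Y ω ^ 2 := by ring
  have hrhs : Integrable (fun ω => 1 + t * Y ω + t ^ 2 * Y ω ^ 2) P :=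
    ((integrable_const 1).add (hY.const_mul t)).add (hY2.const_mul (t ^ 2))
  calc ProbabilityTheory.mgf Y P t = ∫ ω, Real.exp (t * Y ω) ∂P := rfl
  _ ≤ ∫ ω, (1 + t * Y ω + t ^ 2 * Y ω ^ 2) ∂P := integral_mono hint hrhs hpt
  _ = 1 + t * ∫ ω, Y ω ∂P + t ^ 2 * ∫ ω, Y ω ^ 2 ∂P := by
      have hA : Integrable (fun ω => 1 + t * Y ω) P := by
        exact (integrable_const 1).add (hY.const_mul t)
      have hB : Integrable (fun ω => t ^ 2 * Y ω ^ 2) P := by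
        exact hY2.const_mul (t ^ 2)
      have hC : Integrable (fun ω => t * Y ω) P := by exact hY.const_mul t
      rw [integral_add hA hB, integral_add (integrable_const 1) hC, integral_const,
        integral_const_mul, integral_const_mul]
      simp
  _ ≤ 1 + 4 * t ^ 2 := by
      rw [hmean, mul_zero, add_zero]
      have h2 : ∫ ω, Y ω ^ 2 ∂P ≤ 4 := by
        calc ∫ ω, Y ω ^ 2 ∂P ≤ ∫ _ω, (4:ℝ) ∂P := by
              refine integral_mono hY2 (integrable_const 4) fun ω => ?_
              nlinarith [hbdd ω, abs_nonneg (Y ω), sq_abs (Y ω), le_abs_self (Y ω)]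
        _ = 4 := by simp
      nlinarith [sq_nonneg t]
  _ ≤ Real.exp (4 * t ^ 2) := by
      have := Real.add_one_le_exp (4 * t ^ 2)
      linarith


lemma myhoeff {Ω : Type*} [MeasurableSpace Ω] (P : Measure Ω) [IsProbabilityMeasure P]
    (Y : ℕ → Ω → ℝ) (hmeas : ∀ k, Measurable (Y k))
    (hindep : ProbabilityTheory.iIndepFun Y P)
    (hbdd : ∀ k ω, |Y k ω| ≤ 2) (hmean : ∀ k, ∫ ω, Y k ω ∂P = 0)
    (n : ℕ) (hn : 1 ≤ n) {s : ℝ} (hs : 0 < s) :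
    P {ω | (n : ℝ) * s ≤ ∑ k ∈ Finset.range n, Y k ω} ≤
      ENNReal.ofReal (Real.exp (-((n : ℝ) * s ^ 2 / 16))) := by
  have hn0 : (0:ℝ) < n := by exact_mod_cast hn
  by_cases hs4 : s ≤ 4
  · set t : ℝ := s / 8 with ht_def
    have ht0 : 0 ≤ t := by positivity
    have ht : t ≤ 1/2 := by rw [ht_def]; linarith
    set S : Ω → ℝ := ∑ k ∈ Finset.range n, Y k with hS_def
    have hSapp : ∀ ω, S ω = ∑ k ∈ Finset.range n, Y k ω := fun ω => by
      simp [hS_def, Finset.sum_apply]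
    have hSbdd : ∀ ω, |S ω| ≤ 2 * n := by
      intro ω
      rw [hSapp]
      calc |∑ k ∈ Finset.range n, Y k ω| ≤ ∑ k ∈ Finset.range n, |Y k ω| :=
        Finset.abs_sum_le_sum_abs _ _
      _ ≤ ∑ _k ∈ Finset.range n, (2:ℝ) := Finset.sum_le_sum fun k _ => hbdd k ω
      _ = 2 * n := by simp [mul_comm]
    have hSmeas : Measurable S := by
      have : Measurable fun ω => ∑ k ∈ Finset.range n, Y k ω :=
        Finset.measurable_sum _ fun k _ => hmeas k
      convert this using 1
      funext ω; exact hSapp ω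
    have hint : Integrable (fun ω => Real.exp (t * S ω)) P := by
      refine myint_bdd P ((hSmeas.const_mul t).exp) (C := Real.exp (t * (2 * n))) fun ω => ?_
      rw [abs_of_pos (Real.exp_pos _)]
      refine Real.exp_le_exp.2 ?_
      calc t * S ω ≤ |t * S ω| := le_abs_self _
      _ = t * |S ω| := by rw [abs_mul, abs_of_nonneg ht0]
      _ ≤ t * (2 * n) := by
          exact mul_le_mul_of_nonneg_left (hSbdd ω) ht0
    have hcher := ProbabilityTheory.measure_ge_le_exp_mul_mgf (μ := P) (X := S)
      ((n : ℝ) * s) ht0 hint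
    have hmgf : ProbabilityTheory.mgf S P t ≤ Real.exp (4 * t ^ 2) ^ n := by
      rw [hS_def, hindep.mgf_sum hmeas]
      calc ∏ k ∈ Finset.range n, ProbabilityTheory.mgf (Y k) P t
          ≤ ∏ _k ∈ Finset.range n, Real.exp (4 * t ^ 2) := by
            refine Finset.prod_le_prod (fun k _ => ProbabilityTheory.mgf_nonneg) fun k _ => ?_
            exact mymgf_bdd P (hmeas k) (hbdd k) (hmean k) ht0 ht
      _ = Real.exp (4 * t ^ 2) ^ n := by rw [Finset.prod_const, Finset.card_range]
    have hbound : (P {ω | (n:ℝ) * s ≤ S ω}).toReal ≤ Real.exp (-((n : ℝ) * s ^ 2 / 16)) := by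
      calc (P {ω | (n:ℝ) * s ≤ S ω}).toReal ≤
          Real.exp (-t * ((n:ℝ) * s)) * ProbabilityTheory.mgf S P t := hcher
      _ ≤ Real.exp (-t * ((n:ℝ) * s)) * Real.exp (4 * t ^ 2) ^ n :=
          mul_le_mul_of_nonneg_left hmgf (Real.exp_pos _).le
      _ = Real.exp (-t * ((n:ℝ) * s) + (n:ℝ) * (4 * t ^ 2)) := by
          rw [← Real.exp_nat_mul, ← Real.exp_add, mul_comm (n:ℝ)]
      _ = Real.exp (-((n : ℝ) * s ^ 2 / 16)) := by
          congr 1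
          rw [ht_def]; ring
    have hset : {ω | (n : ℝ) * s ≤ ∑ k ∈ Finset.range n, Y k ω} = {ω | (n:ℝ) * s ≤ S ω} := by
      ext ω; simp [hSapp]
    rw [hset, ← ENNReal.ofReal_toReal (measure_ne_top P _)]
    exact ENNReal.ofReal_le_ofReal hbound
  · have hempty : {ω | (n : ℝ) * s ≤ ∑ k ∈ Finset.range n, Y k ω} = ∅ := by
      ext ω
      simp only [Set.mem_setOf_eq, Set.mem_empty_iff_false, iff_false, not_le]
      calc ∑ k ∈ Finset.range n, Y k ω ≤ ∑ _k ∈ Finset.range n, (2:ℝ) := by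
            refine Finset.sum_le_sum fun k _ => ?_
            exact le_trans (le_abs_self _) (hbdd k ω)
      _ = 2 * n := by simp [mul_comm]
      _ < (n:ℝ) * s := by nlinarith
    rw [hempty]
    simp


set_option maxHeartbeats 2000000 in
/-- (High-probability empirical process bound.)
If `X_1, X_2, …` are i.i.d. with law `μ`, `F` is a countable family of measurable
functions to `[−1,1]`, `n ≥ 1`, `δ ∈ (0,1)`, and `g_1,…,g_m` is a `√(2/n)`-net for `F`
in the uniform norm, then with probability at least `1 − δ`,
`sup_{f∈F} |(1/n)∑_{i=1}^n f(X_i) − ∫ f dμ| ≤ √((128/n)·(ln m + ln(8/δ)))`. -/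
theorem stmt4 {E Ω : Type*} [MeasurableSpace E] [MeasurableSpace Ω]
    (μ : Measure E) [IsProbabilityMeasure μ]
    (P : Measure Ω) [IsProbabilityMeasure P]
    (X : ℕ → Ω → E) (hXmeas : ∀ i, Measurable (X i))
    (hindep : ProbabilityTheory.iIndepFun X P)
    (hlaw : ∀ i, Measure.map (X i) P = μ)
    {ι : Type*} [Countable ι] (F : ι → E → ℝ)
    (hFmeas : ∀ i, Measurable (F i))
    (hFbdd : ∀ i x, F i x ∈ Set.Icc (-1 : ℝ) 1)
    (n : ℕ) (hn : 1 ≤ n) (δ : ℝ) (hδ : 0 < δ) (hδ1 : δ < 1)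
    (m : ℕ) (g : Fin m → E → ℝ)
    (hgmeas : ∀ j, Measurable (g j))
    (hgbdd : ∀ j x, g j x ∈ Set.Icc (-1 : ℝ) 1)
    (hnet : ∀ i : ι, ∃ j : Fin m, ∀ x : E,
      |F i x - g j x| ≤ Real.sqrt (2 / (n : ℝ))) :
    ENNReal.ofReal (1 - δ) ≤
      P {ω : Ω |
        (⨆ i : ι, |(1 / (n : ℝ)) * ∑ k ∈ Finset.range n, F i (X k ω) - ∫ x, F i x ∂μ|)
          ≤ Real.sqrt ((128 / (n : ℝ)) * (Real.log m + Real.log (8 / δ)))} := by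
  have hn0 : (0:ℝ) < n := by exact_mod_cast hn
  set t0 : ℝ := Real.sqrt ((128 / (n : ℝ)) * (Real.log m + Real.log (8 / δ))) with ht0_def
  by_cases hm : m = 0
  · have hι : IsEmpty ι := by
      refine ⟨fun i => ?_⟩
      obtain ⟨j, -⟩ := hnet i
      exact (hm ▸ j).elim0
    have hset : {ω : Ω |
        (⨆ i : ι, |(1 / (n : ℝ)) * ∑ k ∈ Finset.range n, F i (X k ω) - ∫ x, F i x ∂μ|)
          ≤ t0} = Set.univ := by
      refine Set.eq_univ_of_forall fun ω => ?_
      simp only [Set.mem_setOf_eq]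
      rw [Real.iSup_of_isEmpty]
      exact Real.sqrt_nonneg _
    rw [hset, measure_univ]
    exact ENNReal.ofReal_le_one.2 (by linarith)
  · have hm1 : 1 ≤ m := Nat.one_le_iff_ne_zero.2 hm
    have hm0 : (0:ℝ) < m := by exact_mod_cast hm1
    set L : ℝ := Real.log m + Real.log (8 / δ) with hL_def
    have hlogm : 0 ≤ Real.log m := Real.log_nonneg (by exact_mod_cast hm1)
    have hlog8 : 2 ≤ Real.log (8 / δ) := by
      have h1 : Real.exp 2 ≤ 8 / δ := by
        have he : Real.exp 1 < 2.7182818286 := Real.exp_one_lt_d9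
        have h2 : Real.exp 2 = Real.exp 1 * Real.exp 1 := by
          rw [← Real.exp_add]; norm_num
        have h3 : 8 ≤ 8 / δ := by
          rw [le_div_iff₀ hδ]; nlinarith
        nlinarith [Real.exp_pos 1]
      rw [show (2:ℝ) = Real.log (Real.exp 2) from (Real.log_exp 2).symm]
      exact Real.log_le_log (Real.exp_pos 2) h1
    have hL2 : 2 ≤ L := by rw [hL_def]; linarith
    set ε : ℝ := Real.sqrt (2 / (n : ℝ)) with hε_def
    have hε2 : ε ^ 2 = 2 / n := Real.sq_sqrt (by positivity)
    have ht02 : t0 ^ 2 = 128 / n * L := Real.sq_sqrt (by positivity)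
    have hε0 : 0 ≤ ε := Real.sqrt_nonneg _
    have ht00 : 0 ≤ t0 := Real.sqrt_nonneg _
    have ht0pos : 0 < t0 := Real.sqrt_pos.2 (by positivity)
    set s : ℝ := t0 - 2 * ε with hs_def
    clear_value t0 L ε s
    have hqε : (n:ℝ) * (16 * ε ^ 2) = 32 := by rw [hε2]; field_simp; norm_num
    have hqt : (n:ℝ) * t0 ^ 2 = 128 * L := by rw [ht02]; field_simp
    have hεt0 : 2 * ε ≤ t0 / 2 := by
      have h1 : 16 * ε ^ 2 ≤ t0 ^ 2 := by
        have h2 : (n:ℝ) * (16 * ε ^ 2) ≤ (n:ℝ) * t0 ^ 2 := by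
          rw [hqε, hqt]; linarith
        exact le_of_mul_le_mul_left h2 hn0
      nlinarith [h1, sq_nonneg (t0 - 4 * ε), sq_nonneg (t0 + 4 * ε)]
    have hs_pos : 0 < s := by rw [hs_def]; linarith
    have h32 : 32 * L ≤ (n : ℝ) * s ^ 2 := by
      have h1 : t0 / 2 ≤ s := by rw [hs_def]; linarith
      have h2 : t0 ^ 2 ≤ 4 * s ^ 2 := by
        nlinarith [mul_self_le_mul_self (by linarith : (0:ℝ) ≤ t0 / 2) h1]
      nlinarith [mul_le_mul_of_nonneg_left h2 hn0.le, hqt]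
    set c : Fin m → ℝ := fun j => ∫ x, g j x ∂μ with hc_def
    have hgint : ∀ j, Integrable (g j) μ :=
      fun j => myint_bdd μ (hgmeas j) (C := 1) fun x => abs_le.2 ⟨(hgbdd j x).1, (hgbdd j x).2⟩
    have hFint : ∀ i, Integrable (F i) μ :=
      fun i => myint_bdd μ (hFmeas i) (C := 1) fun x => abs_le.2 ⟨(hFbdd i x).1, (hFbdd i x).2⟩
    have habs : ∀ (f : E → ℝ), |∫ x, f x ∂μ| ≤ ∫ x, |f x| ∂μ := fun f => by
      simpa [Real.norm_eq_abs] using norm_integral_le_integral_norm (μ := μ) f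
    have hcbdd : ∀ j, |c j| ≤ 1 := by
      intro j
      calc |∫ x, g j x ∂μ| ≤ ∫ x, |g j x| ∂μ := habs _
      _ ≤ ∫ _x, (1:ℝ) ∂μ := by
          refine integral_mono ((hgint j).abs) (integrable_const 1) fun x => ?_
          exact abs_le.2 ⟨(hgbdd j x).1, (hgbdd j x).2⟩
      _ = 1 := by simp
    set good : Fin m → Set Ω := fun j =>
      (fun ω => |(1 / (n : ℝ)) * ∑ k ∈ Finset.range n, g j (X k ω) - c j|) ⁻¹' Set.Iic s
      with hgood_def
    have hgoodmeas : ∀ j, MeasurableSet (good j) := by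
      intro j
      have hmeasfun : Measurable fun ω =>
          |(1 / (n : ℝ)) * ∑ k ∈ Finset.range n, g j (X k ω) - c j| :=
        ((((Finset.measurable_sum (Finset.range n) fun k _ =>
          (hgmeas j).comp (hXmeas k)).const_mul _).sub_const _)).abs
      exact hmeasfun measurableSet_Iic
    set G : Set Ω := ⋂ j, good j with hG_def
    have hGmeas : MeasurableSet G := MeasurableSet.iInter fun j => hgoodmeas j
    -- Step 1: inclusion into the target event
    have hsub : G ⊆ {ω : Ω |
        (⨆ i : ι, |(1 / (n : ℝ)) * ∑ k ∈ Finset.range n, F i (X k ω) - ∫ x, F i x ∂μ|)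
          ≤ t0} := by
      intro ω hω
      simp only [Set.mem_setOf_eq]
      refine Real.iSup_le (fun i => ?_) ht00
      obtain ⟨j, hij⟩ := hnet i
      have hωj : |(1 / (n : ℝ)) * ∑ k ∈ Finset.range n, g j (X k ω) - c j| ≤ s := by
        have h := Set.mem_iInter.1 hω j
        simpa [hgood_def] using h
      have hab : |(1 / (n : ℝ)) * ∑ k ∈ Finset.range n, F i (X k ω)
          - (1 / (n : ℝ)) * ∑ k ∈ Finset.range n, g j (X k ω)| ≤ ε := by
        have heq : (1 / (n : ℝ)) * ∑ k ∈ Finset.range n, F i (X k ω)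
            - (1 / (n : ℝ)) * ∑ k ∈ Finset.range n, g j (X k ω)
            = (1 / (n : ℝ)) * ∑ k ∈ Finset.range n, (F i (X k ω) - g j (X k ω)) := by
          rw [Finset.sum_sub_distrib]; ring
        rw [heq, abs_mul, abs_of_nonneg (by positivity : (0:ℝ) ≤ 1 / (n : ℝ))]
        calc (1 / (n : ℝ)) * |∑ k ∈ Finset.range n, (F i (X k ω) - g j (X k ω))|
            ≤ (1 / (n : ℝ)) * ∑ k ∈ Finset.range n, |F i (X k ω) - g j (X k ω)| :=
              mul_le_mul_of_nonneg_left (Finset.abs_sum_le_sum_abs _ _) (by positivity)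
        _ ≤ (1 / (n : ℝ)) * ∑ _k ∈ Finset.range n, ε :=
              mul_le_mul_of_nonneg_left
                (Finset.sum_le_sum fun k _ => hij (X k ω)) (by positivity)
        _ = ε := by
              rw [Finset.sum_const, Finset.card_range, nsmul_eq_mul]
              field_simp
      have hcd : |(∫ x, F i x ∂μ) - c j| ≤ ε := by
        have heq : (∫ x, F i x ∂μ) - c j = ∫ x, (F i x - g j x) ∂μ :=
          (integral_sub (hFint i) (hgint j)).symm
        rw [heq]
        calc |∫ x, (F i x - g j x) ∂μ| ≤ ∫ x, |F i x - g j x| ∂μ := habs _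
        _ ≤ ∫ _x, ε ∂μ := by
              refine integral_mono ((hFint i).sub (hgint j)).abs (integrable_const ε)
                fun x => hij x
        _ = ε := by simp
      have hkey : (1 / (n : ℝ)) * ∑ k ∈ Finset.range n, F i (X k ω) - ∫ x, F i x ∂μ
          = ((1 / (n : ℝ)) * ∑ k ∈ Finset.range n, g j (X k ω) - c j)
            + (((1 / (n : ℝ)) * ∑ k ∈ Finset.range n, F i (X k ω)
              - (1 / (n : ℝ)) * ∑ k ∈ Finset.range n, g j (X k ω))
            + (c j - ∫ x, F i x ∂μ)) := by ring
      rw [hkey]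
      have h3 : |c j - ∫ x, F i x ∂μ| ≤ ε := by rw [abs_sub_comm]; exact hcd
      calc |_| ≤ |(1 / (n : ℝ)) * ∑ k ∈ Finset.range n, g j (X k ω) - c j|
            + |((1 / (n : ℝ)) * ∑ k ∈ Finset.range n, F i (X k ω)
              - (1 / (n : ℝ)) * ∑ k ∈ Finset.range n, g j (X k ω))
            + (c j - ∫ x, F i x ∂μ)| := abs_add_le _ _
      _ ≤ s + (ε + ε) := by
            refine add_le_add hωj ((abs_add_le _ _).trans (add_le_add hab h3))
      _ ≤ t0 := by rw [hs_def]; linarith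
    -- Step 2: probability of bad events
    have hbad : ∀ j, P (good j)ᶜ ≤ ENNReal.ofReal (δ / m) := by
      intro j
      set Y : ℕ → Ω → ℝ := fun k ω => g j (X k ω) - c j with hY_def
      have hYmeas : ∀ k, Measurable (Y k) := fun k =>
        ((hgmeas j).comp (hXmeas k)).sub_const _
      have hYindep : ProbabilityTheory.iIndepFun Y P :=
        hindep.comp (fun _ => fun x => g j x - c j) (fun _ => (hgmeas j).sub_const _)
      have hYbdd : ∀ k ω, |Y k ω| ≤ 2 := by
        intro k ω
        have h1 : |g j (X k ω)| ≤ 1 :=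
          abs_le.2 ⟨(hgbdd j (X k ω)).1, (hgbdd j (X k ω)).2⟩
        have h2 := hcbdd j
        calc |Y k ω| = |g j (X k ω) + -(c j)| := by
              simp only [hY_def]; rw [sub_eq_add_neg]
        _ ≤ |g j (X k ω)| + |-(c j)| := abs_add_le _ _
        _ ≤ 2 := by rw [abs_neg]; exact (add_le_add h1 h2).trans (by norm_num)
      have hYmean : ∀ k, ∫ ω, Y k ω ∂P = 0 := by
        intro k
        have hginb : Integrable (fun ω => g j (X k ω)) P :=
          myint_bdd P ((hgmeas j).comp (hXmeas k)) (C := 1)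
            fun ω => abs_le.2 ⟨(hgbdd j (X k ω)).1, (hgbdd j (X k ω)).2⟩
        have hmap : ∫ ω, g j (X k ω) ∂P = c j := by
          have hcj : c j = ∫ x, g j x ∂μ := rfl
          rw [hcj, ← hlaw k,
            integral_map (hXmeas k).aemeasurable (hgmeas j).aestronglyMeasurable]
        calc ∫ ω, Y k ω ∂P = ∫ ω, (g j (X k ω) - c j) ∂P := rfl
        _ = (∫ ω, g j (X k ω) ∂P) - c j := by
            rw [integral_sub hginb (integrable_const _), integral_const]; simp
        _ = 0 := by rw [hmap]; ring
      have hA := myhoeff P Y hYmeas hYindep hYbdd hYmean n hn hs_pos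
      have hNmeas : ∀ k, Measurable (fun ω => -(Y k ω)) := fun k => (hYmeas k).neg
      have hNindep : ProbabilityTheory.iIndepFun
          (fun k => fun ω => -(Y k ω)) P :=
        hYindep.comp (fun _ => fun x : ℝ => -x) (fun _ => measurable_neg)
      have hNbdd : ∀ k ω, |(fun ω => -(Y k ω)) ω| ≤ 2 := by
        intro k ω; rw [abs_neg]; exact hYbdd k ω
      have hNmean : ∀ k, ∫ ω, (fun ω => -(Y k ω)) ω ∂P = 0 := by
        intro k
        simp only [integral_neg, hYmean k, neg_zero]
      have hB := myhoeff P (fun k => fun ω => -(Y k ω)) hNmeas hNindep hNbdd hNmean n hn hs_pos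
      have hincl : (good j)ᶜ ⊆ {ω | (n : ℝ) * s ≤ ∑ k ∈ Finset.range n, Y k ω}
          ∪ {ω | (n : ℝ) * s ≤ ∑ k ∈ Finset.range n, (fun ω => -(Y k ω)) ω} := by
        intro ω hω
        simp only [hgood_def, Set.mem_compl_iff, Set.mem_preimage, Set.mem_Iic, not_le] at hω
        have hsum : ∑ k ∈ Finset.range n, Y k ω
            = (∑ k ∈ Finset.range n, g j (X k ω)) - n * c j := by
          simp only [hY_def]
          rw [Finset.sum_sub_distrib, Finset.sum_const, Finset.card_range, nsmul_eq_mul]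
        have h1 : (1 / (n : ℝ)) * ∑ k ∈ Finset.range n, g j (X k ω) - c j
            = (1 / (n : ℝ)) * ∑ k ∈ Finset.range n, Y k ω := by
          rw [hsum]; field_simp
        rw [h1] at hω
        have h2 : (n : ℝ) * s < |∑ k ∈ Finset.range n, Y k ω| := by
          rw [abs_mul, abs_of_nonneg (by positivity : (0:ℝ) ≤ 1 / (n:ℝ))] at hω
          calc (n : ℝ) * s < (n : ℝ) * ((1 / (n : ℝ)) * |∑ k ∈ Finset.range n, Y k ω|) :=
                by exact (mul_lt_mul_iff_right₀ hn0).2 hω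
          _ = |∑ k ∈ Finset.range n, Y k ω| := by field_simp
        rcases abs_cases (∑ k ∈ Finset.range n, Y k ω) with ⟨heq, -⟩ | ⟨heq, -⟩
        · left
          exact le_of_lt (heq ▸ h2)
        · right
          simp only [Set.mem_setOf_eq, Finset.sum_neg_distrib]
          rw [heq] at h2
          linarith
      have hexp2 : Real.exp (-((n : ℝ) * s ^ 2 / 16)) + Real.exp (-((n : ℝ) * s ^ 2 / 16))
          ≤ δ / m := by
        have he1 : Real.exp (-((n : ℝ) * s ^ 2 / 16)) ≤ Real.exp (-(2 * L)) :=
          Real.exp_le_exp.2 (by linarith)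
        have hexpL : Real.exp L = (m : ℝ) * (8 / δ) := by
          rw [hL_def, Real.exp_add, Real.exp_log hm0, Real.exp_log (by positivity)]
        have he2 : Real.exp (-(2 * L)) = ((m : ℝ) * (8 / δ) * ((m : ℝ) * (8 / δ)))⁻¹ := by
          rw [show -(2*L) = -(L + L) from by ring, Real.exp_neg, Real.exp_add, hexpL]
        have hfin : 2 * ((m : ℝ) * (8 / δ) * ((m : ℝ) * (8 / δ)))⁻¹ ≤ δ / m := by
          have hx : (m : ℝ) * (8 / δ) * ((m : ℝ) * (8 / δ)) = 64 * (m:ℝ) ^ 2 / δ ^ 2 := by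
            field_simp; ring
          rw [hx, inv_div, ← mul_div_assoc, div_le_div_iff₀ (by positivity) hm0]
          have hmm : (1:ℝ) ≤ (m:ℝ) := by exact_mod_cast hm1
          nlinarith [mul_le_mul_of_nonneg_left hδ1.le
              (by positivity : (0:ℝ) ≤ 2 * δ * (m:ℝ)),
            mul_le_mul_of_nonneg_left hmm (by positivity : (0:ℝ) ≤ 64 * δ * (m:ℝ)),
            mul_nonneg hδ.le hm0.le]
        calc Real.exp (-((n : ℝ) * s ^ 2 / 16)) + Real.exp (-((n : ℝ) * s ^ 2 / 16))
            ≤ Real.exp (-(2*L)) + Real.exp (-(2*L)) := add_le_add he1 he1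
        _ = 2 * Real.exp (-(2*L)) := by ring
        _ ≤ δ / m := by rw [he2]; exact hfin
      calc P (good j)ᶜ ≤ P ({ω | (n : ℝ) * s ≤ ∑ k ∈ Finset.range n, Y k ω}
            ∪ {ω | (n : ℝ) * s ≤ ∑ k ∈ Finset.range n, (fun ω => -(Y k ω)) ω}) :=
            measure_mono hincl
      _ ≤ P {ω | (n : ℝ) * s ≤ ∑ k ∈ Finset.range n, Y k ω}
            + P {ω | (n : ℝ) * s ≤ ∑ k ∈ Finset.range n, (fun ω => -(Y k ω)) ω} :=
            measure_union_le _ _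
      _ ≤ ENNReal.ofReal (Real.exp (-((n : ℝ) * s ^ 2 / 16)))
            + ENNReal.ofReal (Real.exp (-((n : ℝ) * s ^ 2 / 16))) := add_le_add hA hB
      _ = ENNReal.ofReal (Real.exp (-((n : ℝ) * s ^ 2 / 16))
            + Real.exp (-((n : ℝ) * s ^ 2 / 16))) :=
          (ENNReal.ofReal_add (Real.exp_pos _).le (Real.exp_pos _).le).symm
      _ ≤ ENNReal.ofReal (δ / m) := ENNReal.ofReal_le_ofReal hexp2
    -- Step 3: union bound and conclusion
    have hGc : P Gᶜ ≤ ENNReal.ofReal δ := by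
      rw [hG_def, Set.compl_iInter]
      calc P (⋃ j, (good j)ᶜ) ≤ ∑' j : Fin m, P (good j)ᶜ := measure_iUnion_le _
      _ ≤ ∑' _j : Fin m, ENNReal.ofReal (δ / (m:ℝ)) := ENNReal.tsum_le_tsum fun j => hbad j
      _ = (m : ℝ≥0∞) * ENNReal.ofReal (δ / (m:ℝ)) := by
          rw [tsum_fintype]
          simp [Finset.card_univ, mul_comm]
      _ = ENNReal.ofReal δ := by
          rw [show ((m:ℕ) : ℝ≥0∞) = ENNReal.ofReal ((m:ℕ) : ℝ) from by
              simp,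
            ← ENNReal.ofReal_mul (by positivity)]
          congr 1
          field_simp
    have hPG : 1 - ENNReal.ofReal δ ≤ P G := by
      have hcompl : P Gᶜ = 1 - P G := prob_compl_eq_one_sub hGmeas
      rw [hcompl] at hGc
      have h1 : (1:ℝ≥0∞) ≤ ENNReal.ofReal δ + P G := tsub_le_iff_right.1 hGc
      exact tsub_le_iff_right.2 (by rwa [add_comm] at h1)
    calc ENNReal.ofReal (1 - δ) = ENNReal.ofReal 1 - ENNReal.ofReal δ :=
          ENNReal.ofReal_sub 1 hδ.le
    _ = 1 - ENNReal.ofReal δ := by rw [ENNReal.ofReal_one]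
    _ ≤ P G := hPG
    _ ≤ _ := measure_mono hsub
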